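/- Fix λ ∈ (0,1), μ > 0, ν > 0, and an integer buffer size B ≥ 1. Consider states (q_1,…,q_B, δ_0, δ_1) with 1 ≥ q_1 ≥ q_2 ≥ ⋯ ≥ q_B ≥ 0 (setting q_{B+1} := 0), δ_0 ≥ 0, δ_1 ≥ 0, and q_1 + δ_0 + δ_1 ≤ 1. With u, p_0, p_1,…,p_B and ξ' defined as in the TABS fluid-limit system, the stationarity conditions λ·p_{i−1} = q_i − q_{i+1} for i = 1,…,B, together with μ·u = ξ' and ξ' = ν·δ_1, hold if and only if q_1 = λ, q_i = 0 for 2 ≤ i ≤ B, δ_0 = 1 − λ, and δ_1 = 0. That is, the fluid limit of the TABS scheme with constant arrival rate λ < 1 has this state as its unique fixed point. -/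

import Mathlib

open Filter

/-- Fraction of idle-on servers: `u = 1 − q_1 − δ_0 − δ_1`. -/
noncomputable def tabsU (q : ℕ → ℝ) (d0 d1 : ℝ) : ℝ := 1 - q 1 - d0 - d1

/-- `p_0 = 1` if `u > 0`, and `p_0 = min{(δ_1 ν + q_1 − q_2)/λ, 1}` if `u = 0`
(for states with `u ≥ 0` only the case distinction `u > 0` vs `u = 0` matters). -/
noncomputable def tabsP0 (lam nu : ℝ) (q : ℕ → ℝ) (d0 d1 : ℝ) : ℝ :=
  if 0 < tabsU q d0 d1 then 1 else min ((d1 * nu + q 1 - q 2) / lam) 1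

/-- The task-assignment coefficients of the TABS fluid limit:
`p_i = (1 − p_0)(q_i − q_{i+1})/q_1` for `i ≥ 1` (set to `0` when `q_1 = 0`). -/
noncomputable def tabsP (lam nu : ℝ) (q : ℕ → ℝ) (d0 d1 : ℝ) (i : ℕ) : ℝ :=
  if i = 0 then tabsP0 lam nu q d0 d1
  else if 0 < q 1 then (1 - tabsP0 lam nu q d0 d1) * (q i - q (i + 1)) / q 1
  else 0

/-- The setup-initiation rate `ξ' = λ (1 − p_0) 1{δ_0 > 0}`. -/
noncomputable def tabsXi (lam nu : ℝ) (q : ℕ → ℝ) (d0 d1 : ℝ) : ℝ :=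
  lam * (1 - tabsP0 lam nu q d0 d1) * (if 0 < d0 then 1 else 0)

/-- **Unique fixed point of the TABS fluid limit.**
For `λ ∈ (0,1)`, `μ > 0`, `ν > 0`, buffer size `B ≥ 1`, and a state
`(q_1,…,q_B,δ_0,δ_1)` with `1 ≥ q_1 ≥ ⋯ ≥ q_B ≥ 0` (and `q_i = 0` for `i > B`),
`δ_0, δ_1 ≥ 0`, `q_1 + δ_0 + δ_1 ≤ 1`, the stationarity conditions
`λ p_{i−1} = q_i − q_{i+1}` for `i = 1,…,B`, `μ u = ξ'`, `ξ' = ν δ_1` hold iff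
`q_1 = λ`, `q_i = 0` for `2 ≤ i ≤ B`, `δ_0 = 1 − λ`, `δ_1 = 0`. -/
theorem tabs_fluid_fixed_point
    (lam mu nu : ℝ) (hlam : lam ∈ Set.Ioo (0 : ℝ) 1) (hmu : 0 < mu) (hnu : 0 < nu)
    (B : ℕ) (hB : 1 ≤ B)
    (q : ℕ → ℝ) (d0 d1 : ℝ)
    (hq1 : q 1 ≤ 1)
    (hmono : ∀ i : ℕ, 1 ≤ i → i < B → q (i + 1) ≤ q i)
    (hqB : 0 ≤ q B)
    (htail : ∀ i : ℕ, B < i → q i = 0)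
    (hd0 : 0 ≤ d0) (hd1 : 0 ≤ d1)
    (hsum : q 1 + d0 + d1 ≤ 1) :
    ((∀ i : ℕ, 1 ≤ i → i ≤ B →
        lam * tabsP lam nu q d0 d1 (i - 1) = q i - q (i + 1)) ∧
      mu * tabsU q d0 d1 = tabsXi lam nu q d0 d1 ∧
      tabsXi lam nu q d0 d1 = nu * d1) ↔
    (q 1 = lam ∧ (∀ i : ℕ, 2 ≤ i → i ≤ B → q i = 0) ∧ d0 = 1 - lam ∧ d1 = 0) := by

  obtain ⟨hl0, hl1⟩ := hlam
  have hqB1 : q (B + 1) = 0 := htail _ (Nat.lt_succ_self B)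
  have hq21 : q 2 ≤ q 1 := by
    rcases eq_or_lt_of_le hB with h | h
    · rw [htail 2 (by omega)]
      rw [← h] at hqB; exact hqB
    · exact hmono 1 le_rfl h
  have hnn : ∀ k i : ℕ, 1 ≤ i → i + k = B → 0 ≤ q i := by
    intro k
    induction k with
    | zero =>
      intro i h1 h2
      have hiB : i = B := by omega
      subst hiB
      exact hqB
    | succ k ih =>
      intro i h1 h2
      have h3 := ih (i + 1) (by omega) (by omega)
      exact h3.trans (hmono i h1 (by omega))
  have hq2nn : 0 ≤ q 2 := by
    rcases le_or_gt 2 B with h | h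
    · exact hnn (B - 2) 2 (by omega) (by omega)
    · rw [htail 2 (by omega)]
  constructor
  · rintro ⟨heq, hu, hxi⟩
    have hu_nn : 0 ≤ tabsU q d0 d1 := by unfold tabsU; linarith
    have hu0 : tabsU q d0 d1 = 0 := by
      by_contra h
      have hupos : 0 < tabsU q d0 d1 := hu_nn.lt_of_ne (Ne.symm h)
      have hp0 : tabsP0 lam nu q d0 d1 = 1 := by unfold tabsP0; rw [if_pos hupos]
      have hx0 : tabsXi lam nu q d0 d1 = 0 := by unfold tabsXi; rw [hp0]; ring
      have hmu0 : mu * tabsU q d0 d1 = 0 := by rw [hu, hx0]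
      nlinarith
    have hxi0 : tabsXi lam nu q d0 d1 = 0 := by rw [← hu, hu0, mul_zero]
    have hd1_0 : d1 = 0 := by
      have h := hxi; rw [hxi0] at h
      nlinarith
    have hq1_sum : q 1 + d0 = 1 := by
      have h := hu0; unfold tabsU at h; linarith
    have hp0def : tabsP0 lam nu q d0 d1 = min ((q 1 - q 2) / lam) 1 := by
      unfold tabsP0
      rw [if_neg (by rw [hu0]; exact lt_irrefl 0), hd1_0]
      norm_num
    have hPle : tabsP0 lam nu q d0 d1 ≤ 1 := by rw [hp0def]; exact min_le_right _ _
    have hPnn : 0 ≤ tabsP0 lam nu q d0 d1 := by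
      rw [hp0def]
      refine le_min ?_ zero_le_one
      exact div_nonneg (by linarith) hl0.le
    have hd1eq : lam * tabsP0 lam nu q d0 d1 = q 1 - q 2 := by
      have h := heq 1 le_rfl hB
      have hP : tabsP lam nu q d0 d1 (1 - 1) = tabsP0 lam nu q d0 d1 := by
        unfold tabsP; norm_num
      rw [hP] at h; exact h
    rcases hd0.lt_or_eq with hd0pos | hd0z
    · -- case d0 > 0
      have hxieq : lam * (1 - tabsP0 lam nu q d0 d1) = 0 := by
        have h := hxi0; unfold tabsXi at h; rw [if_pos hd0pos, mul_one] at h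
        exact h
      have hP1 : tabsP0 lam nu q d0 d1 = 1 := by
        rcases mul_eq_zero.mp hxieq with h | h
        · exact absurd h (by positivity)
        · linarith
      have hchain : ∀ i, 2 ≤ i → i ≤ B → q i = q (i + 1) := by
        intro i h2 hiB
        have h := heq i (by omega) hiB
        have hP' : tabsP lam nu q d0 d1 (i - 1) = 0 := by
          unfold tabsP
          rw [if_neg (by omega), hP1]
          split <;> simp
        rw [hP'] at h
        linarith
      have hzero : ∀ k i : ℕ, 2 ≤ i → i + k = B + 1 → q i = 0 := by
        intro k
        induction k with
        | zero =>
          intro i h2 hik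
          have : i = B + 1 := by omega
          rw [this, hqB1]
        | succ k ih =>
          intro i h2 hik
          rw [hchain i h2 (by omega)]
          exact ih (i + 1) (by omega) (by omega)
      have hq2 : q 2 = 0 := hzero (B - 1) 2 le_rfl (by omega)
      have hq1lam : q 1 = lam := by rw [hP1, mul_one, hq2] at hd1eq; linarith
      refine ⟨hq1lam, ?_, by linarith, hd1_0⟩
      intro i h2 hiB
      exact hzero (B + 1 - i) i h2 (by omega)
    · -- case d0 = 0 : contradiction
      exfalso
      have hq1one : q 1 = 1 := by linarith [hq1_sum, hd0z]
      have hdiff : ∀ i : ℕ, 1 ≤ i → i ≤ B →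
          q i - q (i + 1) = (lam * (1 - tabsP0 lam nu q d0 d1)) ^ (i - 1) * (q 1 - q 2) := by
        intro i h1
        induction i, h1 using Nat.le_induction with
        | base => intro _; simp
        | succ i hi ih =>
          intro hiB
          have h := heq (i + 1) (by omega) hiB
          simp only [Nat.add_sub_cancel] at h
          unfold tabsP at h
          rw [if_neg (by omega), if_pos (by rw [hq1one]; norm_num), hq1one, div_one] at h
          have hih := ih (by omega)
          have hpow : i - 1 + 1 = i := by omega
          rw [show q (i + 1 + 1) = q (i + 2) from rfl] at h
          calc q (i + 1) - q (i + 1 + 1)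
              = lam * ((1 - tabsP0 lam nu q d0 d1) * (q i - q (i + 1))) := by
                rw [h]
            _ = (lam * (1 - tabsP0 lam nu q d0 d1)) ^ (i + 1 - 1) * (q 1 - q 2) := by
                rw [hih, Nat.add_sub_cancel,
                  show (lam * (1 - tabsP0 lam nu q d0 d1)) ^ i
                      = (lam * (1 - tabsP0 lam nu q d0 d1)) ^ (i - 1) *
                        (lam * (1 - tabsP0 lam nu q d0 d1)) from by rw [← pow_succ, hpow]]
                ring
      have htel : ∀ i : ℕ, 1 ≤ i → i ≤ B + 1 →
          q i = 1 - (∑ j ∈ Finset.range (i - 1),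
            (lam * (1 - tabsP0 lam nu q d0 d1)) ^ j) * (q 1 - q 2) := by
        intro i h1
        induction i, h1 using Nat.le_induction with
        | base => intro _; simpa using hq1one
        | succ i hi ih =>
          intro hiB
          have h1 := ih (by omega)
          have h2 := hdiff i hi (by omega)
          have hpow : i - 1 + 1 = i := by omega
          rw [Nat.add_sub_cancel, ← hpow, Finset.sum_range_succ, hpow]
          linear_combination h1 - h2
      have hfin : (∑ j ∈ Finset.range B,
          (lam * (1 - tabsP0 lam nu q d0 d1)) ^ j) * (q 1 - q 2) = 1 := by
        have h := htel (B + 1) (by omega) le_rfl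
        rw [hqB1, Nat.add_sub_cancel] at h
        linarith
      set c := lam * (1 - tabsP0 lam nu q d0 d1) with hc
      set D := q 1 - q 2 with hDdef
      have hcD : c + D = lam := by rw [hc, ← hd1eq]; ring
      have hcnn : 0 ≤ c := by
        rw [hc]; exact mul_nonneg hl0.le (by linarith)
      have hDnn : 0 ≤ D := by rw [hDdef]; linarith
      have hgeom : (∑ j ∈ Finset.range B, c ^ j) * (1 - c) = 1 - c ^ B := by
        linear_combination (-1 : ℝ) * geom_sum_mul c B
      have key : 1 - c = (1 - c ^ B) * D := by
        calc 1 - c = (1 - c) * ((∑ j ∈ Finset.range B, c ^ j) * D) := by rw [hfin]; ring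
          _ = ((∑ j ∈ Finset.range B, c ^ j) * (1 - c)) * D := by ring
          _ = (1 - c ^ B) * D := by rw [hgeom]
      have hpownn : 0 ≤ c ^ B := pow_nonneg hcnn B
      nlinarith [key, hcD, hpownn, hDnn]
  · rintro ⟨h1, h2, h3, h4⟩
    have hq2 : q 2 = 0 := by
      rcases le_or_gt 2 B with h | h
      · exact h2 2 le_rfl h
      · exact htail 2 (by omega)
    have hu0 : tabsU q d0 d1 = 0 := by unfold tabsU; rw [h1, h3, h4]; ring
    have hp0 : tabsP0 lam nu q d0 d1 = 1 := by
      unfold tabsP0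
      rw [if_neg (by rw [hu0]; exact lt_irrefl 0), h1, h4, hq2]
      rw [show (0 * nu + lam - 0) / lam = 1 from by field_simp; ring]
      simp
    have hxi : tabsXi lam nu q d0 d1 = 0 := by unfold tabsXi; rw [hp0]; ring
    refine ⟨?_, by rw [hu0, hxi, mul_zero], by rw [hxi, h4, mul_zero]⟩
    intro i hi hiB
    rcases eq_or_lt_of_le hi with h | h
    · have hi1 : i = 1 := h.symm
      subst hi1
      have hP : tabsP lam nu q d0 d1 (1 - 1) = 1 := by
        unfold tabsP; rw [if_pos rfl, hp0]
      rw [hP, h1, hq2, mul_one, sub_zero]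
    · have hqi : q i = 0 := h2 i (by omega) hiB
      have hqi1 : q (i + 1) = 0 := by
        rcases eq_or_lt_of_le hiB with hB' | hB'
        · exact htail _ (by omega)
        · exact h2 (i + 1) (by omega) (by omega)
      have hP : tabsP lam nu q d0 d1 (i - 1) = 0 := by
        unfold tabsP
        rw [if_neg (by omega), hp0]
        split <;> simp
      rw [hP, hqi, hqi1, mul_zero, sub_zero]
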